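/- arXiv:1304.5299 — 2 statements merged into one kernel-verified Lean document; each statement's English description precedes it below -/
import Mathlib

section
/- Let T0 and Tε be two transition kernels on a measurable space with respective stationary distributions S0 and Sε. Suppose T0 satisfies the contraction condition d_v(P T0, S0) ≤ η d_v(P, S0) for all probability distributions P, with a constant η ∈ [0,1), and suppose the one-step error is uniformly bounded: d_v(P T0, P Tε) ≤ Δ for all P, with Δ > 0. Then d_v(S0, Sε) ≤ Δ/(1-η). -/
open MeasureTheory ProbabilityTheory Filter

/-- Total variation distance between two measures: supremum over sets of the
absolute difference of their (real-valued) masses. -/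
noncomputable def tvDist {Ω : Type*} [MeasurableSpace Ω] (μ ν : Measure Ω) : ℝ :=
  ⨆ A : Set Ω, |(μ A).toReal - (ν A).toReal|

lemma isProbabilityMeasure_bind' {Ω : Type*} [MeasurableSpace Ω]
    (μ : Measure Ω) [IsProbabilityMeasure μ] (κ : ProbabilityTheory.Kernel Ω Ω)
    [IsMarkovKernel κ] : IsProbabilityMeasure (μ.bind κ) := by
  constructor
  rw [Measure.bind_apply MeasurableSet.univ (Kernel.measurable κ).aemeasurable]
  simp

lemma tv_term_le {Ω : Type*} [MeasurableSpace Ω] (μ ν : Measure Ω)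
    [IsProbabilityMeasure μ] [IsProbabilityMeasure ν] (A : Set Ω) :
    |(μ A).toReal - (ν A).toReal| ≤ 1 := by
  have h1 : (μ A).toReal ≤ 1 := by
    have := prob_le_one (μ := μ) (s := A)
    simpa using ENNReal.toReal_mono (by simp) this
  have h2 : (ν A).toReal ≤ 1 := by
    have := prob_le_one (μ := ν) (s := A)
    simpa using ENNReal.toReal_mono (by simp) this
  have h3 : 0 ≤ (μ A).toReal := ENNReal.toReal_nonneg
  have h4 : 0 ≤ (ν A).toReal := ENNReal.toReal_nonneg
  rw [abs_sub_le_iff]; constructor <;> linarith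

lemma tv_bdd {Ω : Type*} [MeasurableSpace Ω] (μ ν : Measure Ω)
    [IsProbabilityMeasure μ] [IsProbabilityMeasure ν] :
    BddAbove (Set.range fun A : Set Ω => |(μ A).toReal - (ν A).toReal|) := by
  refine ⟨1, ?_⟩
  rintro x ⟨A, rfl⟩
  exact tv_term_le μ ν A

lemma tvDist_self {Ω : Type*} [MeasurableSpace Ω] (μ : Measure Ω) :
    tvDist μ μ = 0 := by
  simp [tvDist]

lemma tvDist_comm {Ω : Type*} [MeasurableSpace Ω] (μ ν : Measure Ω) :
    tvDist μ ν = tvDist ν μ := by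
  unfold tvDist
  congr 1; ext A; exact abs_sub_comm _ _

lemma tvDist_triangle {Ω : Type*} [MeasurableSpace Ω] (μ ν ρ : Measure Ω)
    [IsProbabilityMeasure μ] [IsProbabilityMeasure ν] [IsProbabilityMeasure ρ] :
    tvDist μ ν ≤ tvDist μ ρ + tvDist ρ ν := by
  apply ciSup_le
  intro A
  calc |(μ A).toReal - (ν A).toReal|
      ≤ |(μ A).toReal - (ρ A).toReal| + |(ρ A).toReal - (ν A).toReal| :=
        abs_sub_le _ _ _
    _ ≤ tvDist μ ρ + tvDist ρ ν :=
        add_le_add (le_ciSup (tv_bdd μ ρ) A) (le_ciSup (tv_bdd ρ ν) A)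

/-- If the exact kernel `T0` contracts towards its stationary distribution `S0`
at rate `η < 1`, and the approximate kernel `Tε` is uniformly within `Δ` of
`T0` in one step, then the stationary distribution `Sε` of `Tε` (to which the
iterates of `Tε` converge) satisfies `d_v(S0, Sε) ≤ Δ / (1 - η)`. -/
theorem stmt0 {Ω : Type*} [MeasurableSpace Ω]
    (T0 Tε : ProbabilityTheory.Kernel Ω Ω) [IsMarkovKernel T0] [IsMarkovKernel Tε]
    (S0 Sε : Measure Ω) [IsProbabilityMeasure S0] [IsProbabilityMeasure Sε]
    (η Δ : ℝ) (hη0 : 0 ≤ η) (hη1 : η < 1) (hΔ : 0 < Δ)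
    (hstat0 : S0.bind T0 = S0)
    (hstatε : Sε.bind Tε = Sε)
    (hcontr : ∀ P : Measure Ω, IsProbabilityMeasure P →
      tvDist (P.bind T0) S0 ≤ η * tvDist P S0)
    (herr : ∀ P : Measure Ω, IsProbabilityMeasure P →
      tvDist (P.bind T0) (P.bind Tε) ≤ Δ)
    (hconv : ∀ P : Measure Ω, IsProbabilityMeasure P →
      Tendsto (fun t : ℕ => tvDist ((fun μ : Measure Ω => μ.bind Tε)^[t] P) Sε)
        atTop (nhds 0)) :
    tvDist S0 Sε ≤ Δ / (1 - η) := by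
  set F : Measure Ω → Measure Ω := fun μ => μ.bind Tε with hF
  set P : ℕ → Measure Ω := fun t => F^[t] S0 with hP
  have hPsucc : ∀ t, P (t + 1) = (P t).bind Tε := by
    intro t
    simp only [hP, Function.iterate_succ_apply']; rfl
  have hprob : ∀ t, IsProbabilityMeasure (P t) := by
    intro t
    induction t with
    | zero => simpa [hP] using (inferInstance : IsProbabilityMeasure S0)
    | succ n ih => rw [hPsucc n]; exact isProbabilityMeasure_bind' (P n) Tε
  have hone : 0 < 1 - η := by linarith
  -- key bound: tvDist S0 (P t) ≤ Δ / (1 - η)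
  have hkey : ∀ t, tvDist S0 (P t) ≤ Δ / (1 - η) := by
    intro t
    induction t with
    | zero =>
        simp only [hP, Function.iterate_zero_apply, tvDist_self]
        positivity
    | succ n ih =>
        haveI := hprob n
        haveI : IsProbabilityMeasure ((P n).bind T0) := isProbabilityMeasure_bind' _ _
        haveI : IsProbabilityMeasure ((P n).bind Tε) := isProbabilityMeasure_bind' _ _
        rw [hPsucc n]
        calc tvDist S0 ((P n).bind Tε)
            ≤ tvDist S0 ((P n).bind T0) + tvDist ((P n).bind T0) ((P n).bind Tε) :=
              tvDist_triangle _ _ _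
          _ ≤ η * tvDist (P n) S0 + Δ := by
              apply add_le_add _ (herr (P n) (hprob n))
              rw [tvDist_comm]
              exact hcontr (P n) (hprob n)
          _ ≤ η * (Δ / (1 - η)) + Δ := by
              apply add_le_add_left
              apply mul_le_mul_of_nonneg_left _ hη0
              rw [tvDist_comm]; exact ih
          _ = Δ / (1 - η) := by field_simp; ring
  -- conclude via convergence
  have hlim := hconv S0 inferInstance
  have hle : ∀ t : ℕ, tvDist S0 Sε ≤ Δ / (1 - η) + tvDist (P t) Sε := by
    intro t
    haveI := hprob t
    calc tvDist S0 Sε ≤ tvDist S0 (P t) + tvDist (P t) Sε := tvDist_triangle _ _ _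
      _ ≤ Δ / (1 - η) + tvDist (P t) Sε := add_le_add_left (hkey t) _
  have hlim' : Tendsto (fun t : ℕ => Δ / (1 - η) + tvDist (P t) Sε) atTop
      (nhds (Δ / (1 - η) + 0)) := tendsto_const_nhds.add hlim
  rw [add_zero] at hlim'
  exact le_of_tendsto_of_tendsto' tendsto_const_nhds hlim' hle
end

section
/- If the exact Gibbs sampler transition kernel T0 on {0,1}^D satisfies d_v(P T0, S0) ≤ η d_v(P, S0) for all P with η ∈ [0,1) (Dobrushin-type contraction), and an approximate Gibbs sampler with per-site conditional error at most Δ_max has stationary distribution Sε, then d_v(S0, Sε) ≤ Δ_max/(1−η). -/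
open Filter

open Classical in
/-- The single-site Gibbs transition kernel on `{0,1}^D`. -/
noncomputable def gibbsKernel (D : ℕ) (pc : Fin D → (Fin D → Bool) → ℝ)
    (i : Fin D) (x y : Fin D → Bool) : ℝ :=
  if ∀ j, j ≠ i → x j = y j then (if y i then pc i y else 1 - pc i y) else 0

/-- The random-scan Gibbs transition kernel on `{0,1}^D`. -/
noncomputable def gibbsScanKernel (D : ℕ) (pc : Fin D → (Fin D → Bool) → ℝ)
    (x y : Fin D → Bool) : ℝ :=
  (1 / D : ℝ) * ∑ i, gibbsKernel D pc i x y

/-- Applying a transition kernel on the finite space `{0,1}^D` to a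
distribution (represented as a probability vector). -/
noncomputable def applyKernel (D : ℕ) (T : (Fin D → Bool) → (Fin D → Bool) → ℝ)
    (P : (Fin D → Bool) → ℝ) : (Fin D → Bool) → ℝ :=
  fun y => ∑ x, P x * T x y

/-- Total variation distance on the finite space `{0,1}^D`. -/
noncomputable def tvFin (D : ℕ) (P Q : (Fin D → Bool) → ℝ) : ℝ :=
  (1 / 2) * ∑ x, |P x - Q x|

set_option maxHeartbeats 1000000 in
open Classical in
lemma kernel_diff_bound (D : ℕ) (pc pcε : Fin D → (Fin D → Bool) → ℝ)
    (Δmax : ℝ) (hΔ : ∀ i x, |pcε i x - pc i x| ≤ Δmax)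
    (i : Fin D) (x : Fin D → Bool) :
    ∑ y, |gibbsKernel D pcε i x y - gibbsKernel D pc i x y| ≤ 2 * Δmax := by
  have hbound : ∀ y, |gibbsKernel D pcε i x y - gibbsKernel D pc i x y|
      ≤ if ∀ j, j ≠ i → x j = y j then Δmax else 0 := by
    intro y
    unfold gibbsKernel
    by_cases h : ∀ j, j ≠ i → x j = y j
    · rw [if_pos h, if_pos h, if_pos h]
      by_cases hy : y i
      · simp only [hy, if_true]; exact hΔ i y
      · simp only [hy, if_false]
        have h2 := hΔ i y
        rw [abs_sub_comm] at h2
        calc |1 - pcε i y - (1 - pc i y)| = |pc i y - pcε i y| := by ring_nf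
          _ ≤ Δmax := h2
    · simp [h]
  have hset : Finset.univ.filter (fun y => ∀ j, j ≠ i → x j = y j)
      = {Function.update x i true, Function.update x i false} := by
    ext y
    simp only [Finset.mem_filter, Finset.mem_univ, true_and, Finset.mem_insert,
      Finset.mem_singleton]
    constructor
    · intro h
      have hy : y = Function.update x i (y i) := by
        funext j
        by_cases hj : j = i
        · subst hj; simp
        · rw [Function.update_of_ne hj]; exact (h j hj).symm
      cases hb : y i
      · right; rw [hy, hb]
      · left; rw [hy, hb]
    · rintro (rfl | rfl) j hj <;> simp [Function.update_of_ne hj]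
  have hne : Function.update x i true ≠ Function.update x i false := by
    intro h
    have := congrFun h i
    simp at this
  calc ∑ y, |gibbsKernel D pcε i x y - gibbsKernel D pc i x y|
      ≤ ∑ y, (if ∀ j, j ≠ i → x j = y j then Δmax else 0) :=
        Finset.sum_le_sum (fun y _ => hbound y)
    _ = ∑ _z ∈ (Finset.univ : Finset (Fin D → Bool)).filter (fun y => ∀ j, j ≠ i → x j = y j), Δmax :=
        (Finset.sum_filter _ _).symm
    _ = 2 * Δmax := by
        rw [hset, Finset.sum_pair hne]; ring

lemma scan_diff_bound (D : ℕ) (hD : 0 < D) (pc pcε : Fin D → (Fin D → Bool) → ℝ)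
    (Δmax : ℝ) (hΔ : ∀ i x, |pcε i x - pc i x| ≤ Δmax)
    (x : Fin D → Bool) :
    ∑ y, |gibbsScanKernel D pcε x y - gibbsScanKernel D pc x y| ≤ 2 * Δmax := by
  have hD0 : (0:ℝ) < D := by exact_mod_cast hD
  have step : ∀ y, |gibbsScanKernel D pcε x y - gibbsScanKernel D pc x y|
      ≤ (1 / D : ℝ) * ∑ i, |gibbsKernel D pcε i x y - gibbsKernel D pc i x y| := by
    intro y
    unfold gibbsScanKernel
    rw [← mul_sub, ← Finset.sum_sub_distrib, abs_mul,
      abs_of_nonneg (by positivity : (0:ℝ) ≤ 1 / D)]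
    exact mul_le_mul_of_nonneg_left (Finset.abs_sum_le_sum_abs _ _) (by positivity)
  calc ∑ y, |gibbsScanKernel D pcε x y - gibbsScanKernel D pc x y|
      ≤ ∑ y, (1 / D : ℝ) * ∑ i, |gibbsKernel D pcε i x y - gibbsKernel D pc i x y| :=
        Finset.sum_le_sum (fun y _ => step y)
    _ = (1 / D : ℝ) * ∑ i, ∑ y, |gibbsKernel D pcε i x y - gibbsKernel D pc i x y| := by
        rw [← Finset.mul_sum, Finset.sum_comm]
    _ ≤ (1 / D : ℝ) * ∑ _i : Fin D, 2 * Δmax := by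
        apply mul_le_mul_of_nonneg_left _ (by positivity)
        exact Finset.sum_le_sum (fun i _ => kernel_diff_bound D pc pcε Δmax hΔ i x)
    _ = 2 * Δmax := by
        rw [Finset.sum_const, Finset.card_univ, Fintype.card_fin, nsmul_eq_mul]
        field_simp

lemma one_step_bound (D : ℕ) (hD : 0 < D) (pc pcε : Fin D → (Fin D → Bool) → ℝ)
    (Δmax : ℝ) (hΔ : ∀ i x, |pcε i x - pc i x| ≤ Δmax)
    (P : (Fin D → Bool) → ℝ) (hP0 : ∀ x, 0 ≤ P x) (hP1 : ∑ x, P x = 1) :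
    tvFin D (applyKernel D (gibbsScanKernel D pcε) P)
      (applyKernel D (gibbsScanKernel D pc) P) ≤ Δmax := by
  unfold tvFin applyKernel
  have key : ∀ y : Fin D → Bool,
      |∑ x, P x * gibbsScanKernel D pcε x y - ∑ x, P x * gibbsScanKernel D pc x y|
      ≤ ∑ x, P x * |gibbsScanKernel D pcε x y - gibbsScanKernel D pc x y| := by
    intro y
    rw [← Finset.sum_sub_distrib]
    refine le_trans (Finset.abs_sum_le_sum_abs _ _) ?_
    apply Finset.sum_le_sum
    intro x _
    rw [← mul_sub, abs_mul, abs_of_nonneg (hP0 x)]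
  have h1 : ∑ y, |∑ x, P x * gibbsScanKernel D pcε x y - ∑ x, P x * gibbsScanKernel D pc x y|
      ≤ 2 * Δmax := by
    calc _ ≤ ∑ y, ∑ x, P x * |gibbsScanKernel D pcε x y - gibbsScanKernel D pc x y| :=
          Finset.sum_le_sum (fun y _ => key y)
      _ = ∑ x, P x * ∑ y, |gibbsScanKernel D pcε x y - gibbsScanKernel D pc x y| := by
          rw [Finset.sum_comm]
          exact Finset.sum_congr rfl (fun x _ => (Finset.mul_sum _ _ _).symm)
      _ ≤ ∑ x, P x * (2 * Δmax) := by
          apply Finset.sum_le_sum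
          intro x _
          exact mul_le_mul_of_nonneg_left (scan_diff_bound D hD pc pcε Δmax hΔ x) (hP0 x)
      _ = 2 * Δmax := by rw [← Finset.sum_mul, hP1, one_mul]
  linarith

lemma tvFin_symm (D : ℕ) (P Q : (Fin D → Bool) → ℝ) : tvFin D P Q = tvFin D Q P := by
  unfold tvFin
  congr 1
  exact Finset.sum_congr rfl (fun x _ => abs_sub_comm _ _)

lemma tvFin_triangle (D : ℕ) (P Q R : (Fin D → Bool) → ℝ) :
    tvFin D P R ≤ tvFin D P Q + tvFin D Q R := by
  unfold tvFin
  rw [← mul_add, ← Finset.sum_add_distrib]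
  apply mul_le_mul_of_nonneg_left _ (by norm_num : (0:ℝ) ≤ 1/2)
  apply Finset.sum_le_sum
  intro x _
  exact abs_sub_le _ _ _

/-- If the exact Gibbs sampler kernel `T0` on `{0,1}^D` contracts towards its
stationary distribution `S0` at rate `η ∈ [0,1)`, and the approximate Gibbs
sampler (per-site conditional error at most `Δmax`) has stationary
distribution `Sε` (to which its iterates converge), then
`d_v(S0, Sε) ≤ Δmax/(1−η)`. -/
theorem stmt14 (D : ℕ) (hD : 0 < D)
    (pc pcε : Fin D → (Fin D → Bool) → ℝ)
    (hpc : ∀ i x, pc i x ∈ Set.Icc (0 : ℝ) 1)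
    (hpcε : ∀ i x, pcε i x ∈ Set.Icc (0 : ℝ) 1)
    (hpcdep : ∀ i x y, (∀ j, j ≠ i → x j = y j) → pc i x = pc i y)
    (hpcεdep : ∀ i x y, (∀ j, j ≠ i → x j = y j) → pcε i x = pcε i y)
    (Δmax : ℝ) (hΔ : ∀ i x, |pcε i x - pc i x| ≤ Δmax)
    (η : ℝ) (hη0 : 0 ≤ η) (hη1 : η < 1)
    (S0 Sε : (Fin D → Bool) → ℝ)
    (hS00 : ∀ x, 0 ≤ S0 x) (hS01 : ∑ x, S0 x = 1)
    (hSε0 : ∀ x, 0 ≤ Sε x) (hSε1 : ∑ x, Sε x = 1)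
    (hstat0 : applyKernel D (gibbsScanKernel D pc) S0 = S0)
    (hstatε : applyKernel D (gibbsScanKernel D pcε) Sε = Sε)
    (hcontr : ∀ P : (Fin D → Bool) → ℝ, (∀ x, 0 ≤ P x) → ∑ x, P x = 1 →
      tvFin D (applyKernel D (gibbsScanKernel D pc) P) S0 ≤ η * tvFin D P S0)
    (hconv : ∀ P : (Fin D → Bool) → ℝ, (∀ x, 0 ≤ P x) → ∑ x, P x = 1 →
      Tendsto (fun t : ℕ =>
          tvFin D ((applyKernel D (gibbsScanKernel D pcε))^[t] P) Sε)
        atTop (nhds 0)) :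
    tvFin D S0 Sε ≤ Δmax / (1 - η) := by
  have h1 : tvFin D Sε (applyKernel D (gibbsScanKernel D pc) Sε) ≤ Δmax := by
    have := one_step_bound D hD pc pcε Δmax hΔ Sε hSε0 hSε1
    rwa [hstatε] at this
  have h2 := hcontr Sε hSε0 hSε1
  have tri := tvFin_triangle D Sε (applyKernel D (gibbsScanKernel D pc) Sε) S0
  have hsymm : tvFin D S0 Sε = tvFin D Sε S0 := tvFin_symm D S0 Sε
  have hpos : (0:ℝ) < 1 - η := by linarith
  rw [le_div_iff₀ hpos, hsymm]
  nlinarith [tvFin_symm D Sε S0]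
end
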